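/- Let a > 0 and define the smoothed ramp loss ψ(u) = (2/a)·(u₊)² if u ≤ a/2 and ψ(u) = a − (2/a)·((a−u)₊)² if u > a/2, where u₊ = max(u,0). Then for any A ≥ 2/a, the function A·u² − ψ(u) is convex on ℝ. -/

import Mathlib

set_option maxHeartbeats 1000000

/-- derivative of the squared hinge at any point -/
lemma hinge_sq_hasDerivAt (c x : ℝ) :
    HasDerivAt (fun u : ℝ => max (u - c) 0 ^ 2) (2 * max (x - c) 0) x := by
  rcases lt_trichotomy x c with hx | hx | hx
  · have h0 : (fun u : ℝ => max (u - c) 0 ^ 2) =ᶠ[nhds x] (fun _ => (0:ℝ)) := by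
      filter_upwards [eventually_lt_nhds hx] with u hu
      rw [max_eq_right (by linarith)]; ring
    have : HasDerivAt (fun _ : ℝ => (0:ℝ)) 0 x := hasDerivAt_const x 0
    rw [max_eq_right (by linarith), mul_zero]
    exact this.congr_of_eventuallyEq h0
  · subst hx
    rw [sub_self, max_self, mul_zero]
    rw [hasDerivAt_iff_tendsto_slope]
    rw [Metric.tendsto_nhdsWithin_nhds]
    intro ε hε
    refine ⟨ε, hε, fun {u} hu hd => ?_⟩
    simp only [Set.mem_compl_iff, Set.mem_singleton_iff] at hu
    rw [Real.dist_eq, sub_zero]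
    rw [Real.dist_eq] at hd
    have hs : slope (fun u : ℝ => max (u - x) 0 ^ 2) x u = max (u - x) 0 := by
      rw [slope_def_field]
      have hz : max (x - x) 0 = 0 := by simp
      rw [hz]
      rcases lt_or_gt_of_ne hu with h | h
      · rw [max_eq_right (by linarith : u - x ≤ 0)]
        simp
      · rw [max_eq_left (by linarith : (0:ℝ) ≤ u - x)]
        have hne : u - x ≠ 0 := sub_ne_zero.mpr (ne_of_gt h)
        field_simp
        ring
    rw [hs]
    calc |max (u - x) 0| ≤ |u - x| := by
          rcases le_total (u - x) 0 with h | h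
          · rw [max_eq_right h]; simp
          · rw [max_eq_left h]
      _ < ε := hd
  · have h0 : (fun u : ℝ => max (u - c) 0 ^ 2) =ᶠ[nhds x] (fun u => (u - c) ^ 2) := by
      filter_upwards [eventually_gt_nhds hx] with u hu
      rw [max_eq_left (by linarith)]
    have : HasDerivAt (fun u : ℝ => (u - c) ^ 2) (2 * (x - c)) x := by
      have := ((hasDerivAt_id x).sub_const c).fun_pow 2
      simpa using this
    rw [max_eq_left (by linarith)]
    exact this.congr_of_eventuallyEq h0

theorem stmt_8 (a A : ℝ) (ha : 0 < a) (hA : 2 / a ≤ A) :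
    ConvexOn ℝ Set.univ
      (fun u : ℝ => A * u ^ 2 -
        (if u ≤ a / 2 then (2 / a) * (max u 0) ^ 2
         else a - (2 / a) * (max (a - u) 0) ^ 2)) := by
  have ha' : a ≠ 0 := ne_of_gt ha
  -- closed form
  have heq : (fun u : ℝ => A * u ^ 2 -
        (if u ≤ a / 2 then (2 / a) * (max u 0) ^ 2
         else a - (2 / a) * (max (a - u) 0) ^ 2))
      = (fun u : ℝ => A * u ^ 2 - (2/a) * (max (u - 0) 0 ^ 2
          - 2 * max (u - a/2) 0 ^ 2 + max (u - a) 0 ^ 2)) := by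
    funext u
    split_ifs with h
    · -- u ≤ a/2 : max (u - a/2) 0 = 0, max (u - a) 0 = 0
      rw [max_eq_right (by linarith : u - a/2 ≤ 0), max_eq_right (by linarith : u - a ≤ 0)]
      ring_nf
    · push_neg at h
      rw [max_eq_left (by linarith : 0 ≤ u - a/2)]
      rcases le_total u a with h2 | h2
      · rw [max_eq_right (by linarith : u - a ≤ 0),
          max_eq_left (by linarith : 0 ≤ u - 0),
          max_eq_left (by linarith : 0 ≤ a - u)]
        field_simp
        ring
      · rw [max_eq_left (by linarith : 0 ≤ u - a),
          max_eq_left (by linarith : 0 ≤ u - 0),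
          max_eq_right (by linarith : a - u ≤ 0)]
        field_simp
        ring
  rw [heq]
  set f' : ℝ → ℝ := fun x => 2 * A * x - (2/a) * (2 * max (x - 0) 0
      - 2 * (2 * max (x - a/2) 0) + 2 * max (x - a) 0) with hf'
  have hder : ∀ x : ℝ, HasDerivAt (fun u : ℝ => A * u ^ 2 - (2/a) * (max (u - 0) 0 ^ 2
          - 2 * max (u - a/2) 0 ^ 2 + max (u - a) 0 ^ 2)) (f' x) x := by
    intro x
    have h1 := hinge_sq_hasDerivAt 0 x
    have h2 := hinge_sq_hasDerivAt (a/2) x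
    have h3 := hinge_sq_hasDerivAt a x
    have hsq : HasDerivAt (fun u : ℝ => A * u ^ 2) (2 * A * x) x := by
      have := (hasDerivAt_pow 2 x).const_mul A
      simpa [mul_comm, mul_assoc, mul_left_comm] using this
    have := hsq.sub (((h1.sub (h2.const_mul 2)).add h3).const_mul (2/a))
    exact this
  have hdiff : Differentiable ℝ (fun u : ℝ => A * u ^ 2 - (2/a) * (max (u - 0) 0 ^ 2
          - 2 * max (u - a/2) 0 ^ 2 + max (u - a) 0 ^ 2)) :=
    fun x => (hder x).differentiableAt
  have hderiv_eq : deriv (fun u : ℝ => A * u ^ 2 - (2/a) * (max (u - 0) 0 ^ 2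
          - 2 * max (u - a/2) 0 ^ 2 + max (u - a) 0 ^ 2)) = f' :=
    funext fun x => (hder x).deriv
  apply Monotone.convexOn_univ_of_deriv hdiff
  rw [hderiv_eq]
  intro x y hxy
  simp only [hf', sub_zero]
  have key : (max y 0 - 2 * max (y - a/2) 0 + max (y - a) 0)
      - (max x 0 - 2 * max (x - a/2) 0 + max (x - a) 0) ≤ y - x := by
    rcases max_cases x 0 with ⟨e1, e1'⟩ | ⟨e1, e1'⟩ <;>
    rcases max_cases y 0 with ⟨e2, e2'⟩ | ⟨e2, e2'⟩ <;>
    rcases max_cases (x - a/2) 0 with ⟨e3, e3'⟩ | ⟨e3, e3'⟩ <;>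
    rcases max_cases (y - a/2) 0 with ⟨e4, e4'⟩ | ⟨e4, e4'⟩ <;>
    rcases max_cases (x - a) 0 with ⟨e5, e5'⟩ | ⟨e5, e5'⟩ <;>
    rcases max_cases (y - a) 0 with ⟨e6, e6'⟩ | ⟨e6, e6'⟩ <;>
    rw [e1, e2, e3, e4, e5, e6] <;> linarith
  have h1 : (2/a) * ((max y 0 - 2 * max (y - a/2) 0 + max (y - a) 0)
      - (max x 0 - 2 * max (x - a/2) 0 + max (x - a) 0)) ≤ (2/a) * (y - x) :=
    mul_le_mul_of_nonneg_left key (by positivity)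
  have h2 : (2/a) * (y - x) ≤ A * (y - x) :=
    mul_le_mul_of_nonneg_right hA (by linarith)
  linarith
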